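/- Under the admissible-error assumption γ·|G^π(s,a)| ≤ λ·u(s,a), let π̂ maximize the penalized return η_{M̃} and for δ ≥ δ_min := min_π ε_u(π), let π^δ be a maximizer of η_M over {π : ε_u(π) ≤ δ}. Then η_M(π̂) ≥ η_M(π^δ) − 2λδ. -/

import Mathlib

open scoped BigOperators
open Filter Topology Classical

section MDP

variable {S A : Type*} [Fintype S] [Fintype A]

/-- π is a valid stochastic policy. -/
def IsPolicy (π : S → A → ℝ) : Prop :=
  (∀ s a, 0 ≤ π s a) ∧ ∀ s, ∑ a, π s a = 1

/-- T is a valid transition kernel. -/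
def IsKernel (T : S → A → S → ℝ) : Prop :=
  (∀ s a s', 0 ≤ T s a s') ∧ ∀ s a, ∑ s', T s a s' = 1

/-- μ is a probability distribution on states. -/
def IsDist (μ : S → ℝ) : Prop :=
  (∀ s, 0 ≤ μ s) ∧ ∑ s, μ s = 1

/-- Distribution of the state at time t under policy π and dynamics T, from μ0. -/
def stateDist (T : S → A → S → ℝ) (π : S → A → ℝ) (μ0 : S → ℝ) : ℕ → S → ℝ
  | 0 => μ0
  | t + 1 => fun s' => ∑ s, ∑ a, stateDist T π μ0 t s * π s a * T s a s'

/-- Unnormalized discounted occupancy measure ρ^π_T(s,a). -/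
noncomputable def occupancy (γ : ℝ) (T : S → A → S → ℝ) (π : S → A → ℝ)
    (μ0 : S → ℝ) (s : S) (a : A) : ℝ :=
  π s a * ∑' t : ℕ, γ ^ t * stateDist T π μ0 t s

/-- Improper expectation Ē of f with respect to the occupancy measure. -/
noncomputable def expOcc (γ : ℝ) (T : S → A → S → ℝ) (π : S → A → ℝ)
    (μ0 : S → ℝ) (f : S → A → ℝ) : ℝ :=
  ∑ s, ∑ a, occupancy γ T π μ0 s a * f s a

/-- Expected discounted return η_M(π). -/
noncomputable def ret (γ : ℝ) (T : S → A → S → ℝ) (π : S → A → ℝ)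
    (μ0 : S → ℝ) (r : S → A → ℝ) : ℝ :=
  ∑' t : ℕ, γ ^ t * ∑ s, ∑ a, stateDist T π μ0 t s * π s a * r s a

/-- Value function V_M^π(s): return starting from the Dirac distribution at s. -/
noncomputable def value (γ : ℝ) (T : S → A → S → ℝ) (π : S → A → ℝ)
    (r : S → A → ℝ) (s0 : S) : ℝ :=
  ret γ T π (fun s => if s = s0 then 1 else 0) r

/-- G^π(s,a) = E_{s'∼T̂(s,a)}[V_M^π(s')] − E_{s'∼T(s,a)}[V_M^π(s')]. -/
noncomputable def Gpi (γ : ℝ) (T Th : S → A → S → ℝ) (π : S → A → ℝ)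
    (r : S → A → ℝ) (s : S) (a : A) : ℝ :=
  (∑ s', Th s a s' * value γ T π r s') - ∑ s', T s a s' * value γ T π r s'

/-- Total variation distance between two distributions on a finite set. -/
noncomputable def tvDist (P Q : S → ℝ) : ℝ :=
  ⨆ E : Finset S, |(∑ s ∈ E, P s) - ∑ s ∈ E, Q s|

/-- Integral probability metric induced by a function class F. -/
noncomputable def ipm (F : Set (S → ℝ)) (P Q : S → ℝ) : ℝ :=
  sSup {x : ℝ | ∃ f ∈ F, x = |(∑ s, P s * f s) - ∑ s, Q s * f s|}


lemma sd_nonneg {T : S → A → S → ℝ} {π : S → A → ℝ} {μ0 : S → ℝ}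
    (hT : IsKernel T) (hπ : IsPolicy π) (hμ : ∀ s, 0 ≤ μ0 s) :
    ∀ t s, 0 ≤ stateDist T π μ0 t s := by
  intro t
  induction t with
  | zero => exact hμ
  | succ t ih =>
    intro s'
    exact Finset.sum_nonneg fun s _ => Finset.sum_nonneg fun a _ =>
      mul_nonneg (mul_nonneg (ih s) (hπ.1 s a)) (hT.1 s a s')

lemma sd_sum {T : S → A → S → ℝ} {π : S → A → ℝ} {μ0 : S → ℝ}
    (hT : IsKernel T) (hπ : IsPolicy π) (hμ : ∑ s, μ0 s = 1) :
    ∀ t, ∑ s, stateDist T π μ0 t s = 1 := by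
  intro t
  induction t with
  | zero => exact hμ
  | succ t ih =>
    show ∑ s', ∑ s, ∑ a, stateDist T π μ0 t s * π s a * T s a s' = 1
    rw [Finset.sum_comm]
    have : ∀ s, ∑ s', ∑ a, stateDist T π μ0 t s * π s a * T s a s'
        = stateDist T π μ0 t s := by
      intro s
      rw [Finset.sum_comm]
      have : ∀ a, ∑ s', stateDist T π μ0 t s * π s a * T s a s'
          = stateDist T π μ0 t s * π s a := by
        intro a; rw [← Finset.mul_sum, hT.2, mul_one]
      simp only [this, ← Finset.mul_sum, hπ.2, mul_one]
    simp only [this, ih]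

lemma sd_le_one {T : S → A → S → ℝ} {π : S → A → ℝ} {μ0 : S → ℝ}
    (hT : IsKernel T) (hπ : IsPolicy π) (hμ : IsDist μ0) (t : ℕ) (s : S) :
    stateDist T π μ0 t s ≤ 1 := by
  have h := sd_sum hT hπ hμ.2 t
  calc stateDist T π μ0 t s ≤ ∑ s', stateDist T π μ0 t s' :=
        Finset.single_le_sum (fun s' _ => sd_nonneg hT hπ hμ.1 t s') (Finset.mem_univ s)
    _ = 1 := h

lemma summable_sd {T : S → A → S → ℝ} {π : S → A → ℝ} {μ0 : S → ℝ}
    (hT : IsKernel T) (hπ : IsPolicy π) (hμ : IsDist μ0)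
    {γ : ℝ} (hγ0 : 0 ≤ γ) (hγ1 : γ < 1) (s : S) :
    Summable (fun t : ℕ => γ ^ t * stateDist T π μ0 t s) := by
  apply Summable.of_norm_bounded (g := fun t => γ ^ t)
    (summable_geometric_of_lt_one hγ0 hγ1)
  intro t
  rw [Real.norm_eq_abs, abs_mul, abs_of_nonneg (pow_nonneg hγ0 t),
    abs_of_nonneg (sd_nonneg hT hπ hμ.1 t s)]
  calc γ ^ t * stateDist T π μ0 t s ≤ γ ^ t * 1 :=
        mul_le_mul_of_nonneg_left (sd_le_one hT hπ hμ t s) (pow_nonneg hγ0 t)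
    _ = γ ^ t := mul_one _

/-- Swap lemma: the discounted sum of per-step expectations equals expOcc. -/
lemma tsum_eq_expOcc {T : S → A → S → ℝ} {π : S → A → ℝ} {μ0 : S → ℝ}
    (hT : IsKernel T) (hπ : IsPolicy π) (hμ : IsDist μ0)
    {γ : ℝ} (hγ0 : 0 ≤ γ) (hγ1 : γ < 1) (f : S → A → ℝ) :
    ∑' t : ℕ, γ ^ t * ∑ s, ∑ a, stateDist T π μ0 t s * π s a * f s a
      = expOcc γ T π μ0 f := by
  have hsum : ∀ (s : S) (a : A),
      Summable (fun t : ℕ => γ ^ t * stateDist T π μ0 t s * (π s a * f s a)) :=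
    fun s a => (summable_sd hT hπ hμ hγ0 hγ1 s).mul_right _
  have h1 : ∀ t : ℕ, γ ^ t * ∑ s, ∑ a, stateDist T π μ0 t s * π s a * f s a
      = ∑ s, ∑ a, γ ^ t * stateDist T π μ0 t s * (π s a * f s a) := by
    intro t
    rw [Finset.mul_sum]
    congr 1; ext s
    rw [Finset.mul_sum]
    congr 1; ext a; ring
  simp only [h1]
  rw [Summable.tsum_finsetSum (fun s _ => (summable_sum (fun a _ => hsum s a)))]
  have h2 : ∀ s : S, ∑' t : ℕ, ∑ a, γ ^ t * stateDist T π μ0 t s * (π s a * f s a)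
      = ∑ a, ∑' t : ℕ, γ ^ t * stateDist T π μ0 t s * (π s a * f s a) :=
    fun s => Summable.tsum_finsetSum (fun a _ => hsum s a)
  simp only [h2]
  unfold expOcc occupancy
  congr 1; ext s; congr 1; ext a
  rw [tsum_mul_right]
  ring

/-- ret is summable. -/
lemma summable_ret {T : S → A → S → ℝ} {π : S → A → ℝ} {μ0 : S → ℝ}
    (hT : IsKernel T) (hπ : IsPolicy π) (hμ : IsDist μ0)
    {γ : ℝ} (hγ0 : 0 ≤ γ) (hγ1 : γ < 1) (f : S → A → ℝ) :
    Summable (fun t : ℕ => γ ^ t * ∑ s, ∑ a, stateDist T π μ0 t s * π s a * f s a) := by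
  apply Summable.of_norm_bounded (g := fun t => γ ^ t * ∑ s, ∑ a, |f s a|)
    ((summable_geometric_of_lt_one hγ0 hγ1).mul_right _)
  intro t
  rw [Real.norm_eq_abs, abs_mul, abs_of_nonneg (pow_nonneg hγ0 t)]
  apply mul_le_mul_of_nonneg_left _ (pow_nonneg hγ0 t)
  calc |∑ s, ∑ a, stateDist T π μ0 t s * π s a * f s a|
      ≤ ∑ s, |∑ a, stateDist T π μ0 t s * π s a * f s a| := Finset.abs_sum_le_sum_abs _ _
    _ ≤ ∑ s, ∑ a, |stateDist T π μ0 t s * π s a * f s a| :=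
        Finset.sum_le_sum (fun s _ => Finset.abs_sum_le_sum_abs _ _)
    _ ≤ ∑ s, ∑ a, |f s a| := by
        apply Finset.sum_le_sum; intro s _
        apply Finset.sum_le_sum; intro a _
        rw [abs_mul, abs_mul, abs_of_nonneg (sd_nonneg hT hπ hμ.1 t s),
          abs_of_nonneg (hπ.1 s a)]
        have hd1 := sd_le_one hT hπ hμ t s
        have hp1 : π s a ≤ 1 := by
          have := hπ.2 s
          calc π s a ≤ ∑ a', π s a' :=
              Finset.single_le_sum (fun a' _ => hπ.1 s a') (Finset.mem_univ a)
            _ = 1 := this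
        calc stateDist T π μ0 t s * π s a * |f s a| ≤ 1 * |f s a| :=
              mul_le_mul_of_nonneg_right (mul_le_one₀ hd1 (hπ.1 s a) hp1) (abs_nonneg _)
          _ = |f s a| := one_mul _
/-- Helper: pull a Dirac-decomposition sum out of a double sum. -/
lemma dirac_swap (μ0 : S → ℝ) (w : S → S → ℝ) (k : S → A → ℝ) :
    ∑ s, ∑ a, (∑ s0, μ0 s0 * w s0 s) * k s a
      = ∑ s0, μ0 s0 * ∑ s, ∑ a, w s0 s * k s a := by
  have h1 : ∀ s, ∑ a, (∑ s0, μ0 s0 * w s0 s) * k s a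
      = ∑ s0, ∑ a, μ0 s0 * (w s0 s * k s a) := by
    intro s
    rw [Finset.sum_comm]
    refine Finset.sum_congr rfl fun a _ => ?_
    rw [Finset.sum_mul]
    exact Finset.sum_congr rfl fun s0 _ => by ring
  simp only [h1]
  rw [Finset.sum_comm]
  refine Finset.sum_congr rfl fun s0 _ => ?_
  rw [Finset.mul_sum]
  exact Finset.sum_congr rfl fun s _ => (Finset.mul_sum _ _ _).symm

/-- stateDist is linear in the initial distribution (Dirac decomposition). -/
lemma sd_dirac (T : S → A → S → ℝ) (π : S → A → ℝ) (μ0 : S → ℝ) :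
    ∀ t s, stateDist T π μ0 t s
      = ∑ s0, μ0 s0 * stateDist T π (fun s => if s = s0 then 1 else 0) t s := by
  intro t
  induction t with
  | zero =>
    intro s
    show μ0 s = ∑ s0, μ0 s0 * (if s = s0 then 1 else 0)
    simp
  | succ t ih =>
    intro s'
    show ∑ s, ∑ a, stateDist T π μ0 t s * π s a * T s a s' = _
    calc ∑ s, ∑ a, stateDist T π μ0 t s * π s a * T s a s'
        = ∑ s, ∑ a, (∑ s0, μ0 s0 * stateDist T π (fun s => if s = s0 then 1 else 0) t s)
            * (π s a * T s a s') := by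
          refine Finset.sum_congr rfl fun s _ => Finset.sum_congr rfl fun a _ => ?_
          rw [← ih s]; ring
      _ = ∑ s0, μ0 s0 * ∑ s, ∑ a, stateDist T π (fun s => if s = s0 then 1 else 0) t s
            * (π s a * T s a s') := dirac_swap μ0 _ _
      _ = ∑ s0, μ0 s0 * ∑ s, ∑ a, stateDist T π (fun s => if s = s0 then 1 else 0) t s
            * π s a * T s a s' := by
          refine Finset.sum_congr rfl fun s0 _ => ?_
          congr 1
          refine Finset.sum_congr rfl fun s _ => Finset.sum_congr rfl fun a _ => ?_
          ring

lemma dirac_isDist (s0 : S) : IsDist (fun s : S => if s = s0 then 1 else 0) := by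
  constructor
  · intro s; by_cases h : s = s0 <;> simp [h]
  · simp

/-- ret is linear in the initial distribution: ret = ∑ μ0 s * value s. -/
lemma ret_eq_sum_value {T : S → A → S → ℝ} {π : S → A → ℝ}
    (hT : IsKernel T) (hπ : IsPolicy π) (μ0 : S → ℝ)
    {γ : ℝ} (hγ0 : 0 ≤ γ) (hγ1 : γ < 1) (r : S → A → ℝ) :
    ret γ T π μ0 r = ∑ s0, μ0 s0 * value γ T π r s0 := by
  unfold ret value ret
  have h1 : ∀ t : ℕ, γ ^ t * ∑ s, ∑ a, stateDist T π μ0 t s * π s a * r s a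
      = ∑ s0, μ0 s0 * (γ ^ t * ∑ s, ∑ a,
          stateDist T π (fun s => if s = s0 then 1 else 0) t s * π s a * r s a) := by
    intro t
    have key : (∑ s, ∑ a, stateDist T π μ0 t s * π s a * r s a)
        = ∑ s0, μ0 s0 * ∑ s, ∑ a,
            stateDist T π (fun s => if s = s0 then 1 else 0) t s * π s a * r s a := by
      calc ∑ s, ∑ a, stateDist T π μ0 t s * π s a * r s a
          = ∑ s, ∑ a, (∑ s0, μ0 s0 * stateDist T π (fun s => if s = s0 then 1 else 0) t s)
              * (π s a * r s a) := by
            refine Finset.sum_congr rfl fun s _ => Finset.sum_congr rfl fun a _ => ?_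
            rw [← sd_dirac T π μ0 t s]; ring
        _ = ∑ s0, μ0 s0 * ∑ s, ∑ a, stateDist T π (fun s => if s = s0 then 1 else 0) t s
              * (π s a * r s a) := dirac_swap μ0 _ _
        _ = ∑ s0, μ0 s0 * ∑ s, ∑ a, stateDist T π (fun s => if s = s0 then 1 else 0) t s
              * π s a * r s a := by
            refine Finset.sum_congr rfl fun s0 _ => ?_
            congr 1
            refine Finset.sum_congr rfl fun s _ => Finset.sum_congr rfl fun a _ => ?_
            ring
    rw [key, Finset.mul_sum]
    refine Finset.sum_congr rfl fun s0 _ => ?_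
    ring
  simp only [h1]
  rw [Summable.tsum_finsetSum (fun s0 _ =>
    ((summable_ret hT hπ (dirac_isDist s0) hγ0 hγ1 r).mul_left _))]
  exact Finset.sum_congr rfl fun s0 _ => tsum_mul_left

/-- One-step shift of the state distribution. -/
lemma sd_shift (T : S → A → S → ℝ) (π : S → A → ℝ) (μ0 : S → ℝ) :
    ∀ t s, stateDist T π μ0 (t + 1) s = stateDist T π (stateDist T π μ0 1) t s := by
  intro t
  induction t with
  | zero => intro s; rfl
  | succ t ih =>
    intro s'
    show ∑ s, ∑ a, stateDist T π μ0 (t+1) s * π s a * T s a s' = _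
    simp only [ih]
    rfl

/-- Splitting off the first step of ret. -/
lemma ret_split {T : S → A → S → ℝ} {π : S → A → ℝ} {μ0 : S → ℝ}
    (hT : IsKernel T) (hπ : IsPolicy π) (hμ : IsDist μ0)
    {γ : ℝ} (hγ0 : 0 ≤ γ) (hγ1 : γ < 1) (r : S → A → ℝ) :
    ret γ T π μ0 r = (∑ s, ∑ a, μ0 s * π s a * r s a)
      + γ * ret γ T π (stateDist T π μ0 1) r := by
  unfold ret
  rw [Summable.tsum_eq_zero_add (summable_ret hT hπ hμ hγ0 hγ1 r)]
  simp only [pow_zero, one_mul]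
  congr 1
  have : ∀ t : ℕ, γ ^ (t + 1) * ∑ s, ∑ a, stateDist T π μ0 (t+1) s * π s a * r s a
      = γ * (γ ^ t * ∑ s, ∑ a, stateDist T π (stateDist T π μ0 1) t s * π s a * r s a) := by
    intro t
    simp only [sd_shift T π μ0 t]
    ring
  simp only [this]
  rw [tsum_mul_left]

lemma sd_one_isDist {T : S → A → S → ℝ} {π : S → A → ℝ} {μ0 : S → ℝ}
    (hT : IsKernel T) (hπ : IsPolicy π) (hμ : IsDist μ0) :
    IsDist (stateDist T π μ0 1) :=
  ⟨sd_nonneg hT hπ hμ.1 1, sd_sum hT hπ hμ.2 1⟩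

/-- Bellman equation for the value function. -/
lemma bellman {T : S → A → S → ℝ} {π : S → A → ℝ}
    (hT : IsKernel T) (hπ : IsPolicy π)
    {γ : ℝ} (hγ0 : 0 ≤ γ) (hγ1 : γ < 1) (r : S → A → ℝ) (s0 : S) :
    value γ T π r s0 = (∑ a, π s0 a * r s0 a)
      + γ * ∑ a, π s0 a * ∑ s', T s0 a s' * value γ T π r s' := by
  have hd := dirac_isDist (S := S) s0
  unfold value
  rw [ret_split hT hπ hd hγ0 hγ1 r,
    ret_eq_sum_value hT hπ _ hγ0 hγ1 r]
  congr 1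
  · simp
  · congr 1
    have h1 : ∀ s1, stateDist T π (fun s => if s = s0 then 1 else 0) 1 s1
        = ∑ a, π s0 a * T s0 a s1 := by
      intro s1
      show ∑ s, ∑ a, (if s = s0 then (1:ℝ) else 0) * π s a * T s a s1 = _
      rw [Finset.sum_eq_single s0]
      · simp
      · intro s _ hs; simp [hs]
      · intro h; exact absurd (Finset.mem_univ s0) h
    simp only [h1, value]
    have h2 : ∀ x : S, (∑ a, π s0 a * T s0 a x) * ret γ T π (fun s => if s = x then 1 else 0) r
        = ∑ a, π s0 a * T s0 a x * ret γ T π (fun s => if s = x then 1 else 0) r :=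
      fun x => Finset.sum_mul _ _ _
    simp only [h2]
    rw [Finset.sum_comm]
    refine Finset.sum_congr rfl fun a _ => ?_
    rw [Finset.mul_sum]
    refine Finset.sum_congr rfl fun s1 _ => ?_
    ring
/-- Simulation lemma: η_T(π) = η_{T̂}(π) − γ·Ē_{ρ_{T̂}}[G^π]. -/
lemma simulation {T Th : S → A → S → ℝ} {π : S → A → ℝ} {μ0 : S → ℝ}
    (hT : IsKernel T) (hTh : IsKernel Th) (hπ : IsPolicy π) (hμ : IsDist μ0)
    {γ : ℝ} (hγ0 : 0 ≤ γ) (hγ1 : γ < 1) (r : S → A → ℝ) :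
    ret γ T π μ0 r = ret γ Th π μ0 r - γ * expOcc γ Th π μ0 (Gpi γ T Th π r) := by
  set V : S → ℝ := value γ T π r with hV
  set d : ℕ → S → ℝ := stateDist Th π μ0 with hd
  set Rh : ℕ → ℝ := fun t => ∑ s, ∑ a, d t s * π s a * r s a with hRh
  set g : ℕ → ℝ := fun t => ∑ s, ∑ a, d t s * π s a * Gpi γ T Th π r s a with hg
  set W : ℕ → ℝ := fun t => ∑ s, d t s * V s with hW
  -- one step of Bellman
  have step : ∀ t, W t = Rh t + γ * W (t + 1) - γ * g t := by
    intro t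
    have hb : ∀ s, V s = (∑ a, π s a * r s a)
        + γ * ∑ a, π s a * ∑ s', T s a s' * V s' :=
      fun s => bellman hT hπ hγ0 hγ1 r s
    have mid : ∑ s, d t s * ∑ a, π s a * ∑ s', Th s a s' * V s' = W (t + 1) := by
      calc ∑ s, d t s * ∑ a, π s a * ∑ s', Th s a s' * V s'
          = ∑ s, ∑ a, ∑ s', d t s * π s a * Th s a s' * V s' := by
            refine Finset.sum_congr rfl fun s _ => ?_
            rw [Finset.mul_sum]
            refine Finset.sum_congr rfl fun a _ => ?_
            rw [Finset.mul_sum, Finset.mul_sum]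
            refine Finset.sum_congr rfl fun s' _ => ?_
            ring
        _ = ∑ s, ∑ s', ∑ a, d t s * π s a * Th s a s' * V s' :=
            Finset.sum_congr rfl fun s _ => Finset.sum_comm
        _ = ∑ s', ∑ s, ∑ a, d t s * π s a * Th s a s' * V s' := Finset.sum_comm
        _ = ∑ s', (∑ s, ∑ a, d t s * π s a * Th s a s') * V s' := by
            refine Finset.sum_congr rfl fun s' _ => ?_
            rw [Finset.sum_mul]
            exact Finset.sum_congr rfl fun s _ => (Finset.sum_mul _ _ _).symm
        _ = W (t + 1) := rfl
    have per : ∀ s, d t s * V s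
        = (∑ a, d t s * π s a * r s a)
          + γ * (d t s * ∑ a, π s a * ∑ s', Th s a s' * V s')
          - γ * (∑ a, d t s * π s a * Gpi γ T Th π r s a) := by
      intro s
      have hGT : ∀ a, (∑ s', T s a s' * V s')
          = (∑ s', Th s a s' * V s') - Gpi γ T Th π r s a := by
        intro a; unfold Gpi; rw [hV]; ring
      have e1 : ∑ a, π s a * ((∑ s', Th s a s' * V s') - Gpi γ T Th π r s a)
          = (∑ a, π s a * ∑ s', Th s a s' * V s')
            - ∑ a, π s a * Gpi γ T Th π r s a := by
        simp [mul_sub, Finset.sum_sub_distrib]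
      have e2 : ∑ a, d t s * π s a * r s a = d t s * ∑ a, π s a * r s a := by
        rw [Finset.mul_sum]
        exact Finset.sum_congr rfl fun a _ => mul_assoc _ _ _
      have e3 : ∑ a, d t s * π s a * Gpi γ T Th π r s a
          = d t s * ∑ a, π s a * Gpi γ T Th π r s a := by
        rw [Finset.mul_sum]
        exact Finset.sum_congr rfl fun a _ => mul_assoc _ _ _
      rw [hb s]
      simp only [hGT, e1, e2, e3]
      ring
    calc W t = ∑ s, ((∑ a, d t s * π s a * r s a)
          + γ * (d t s * ∑ a, π s a * ∑ s', Th s a s' * V s')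
          - γ * (∑ a, d t s * π s a * Gpi γ T Th π r s a)) :=
        Finset.sum_congr rfl fun s _ => per s
      _ = Rh t + γ * (∑ s, d t s * ∑ a, π s a * ∑ s', Th s a s' * V s') - γ * g t := by
          rw [Finset.sum_sub_distrib, Finset.sum_add_distrib, ← Finset.mul_sum,
            ← Finset.mul_sum]
      _ = Rh t + γ * W (t + 1) - γ * g t := by rw [mid]
  -- summability facts
  have sRh : Summable (fun t => γ ^ t * Rh t) := summable_ret hTh hπ hμ hγ0 hγ1 r
  have sg : Summable (fun t => γ ^ t * g t) :=
    summable_ret hTh hπ hμ hγ0 hγ1 (Gpi γ T Th π r)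
  have hfun : (fun t : ℕ => γ ^ (t + 1) * g t) = fun t => γ * (γ ^ t * g t) := by
    funext t; rw [pow_succ]; ring
  have sg' : Summable (fun t : ℕ => γ ^ (t + 1) * g t) := by
    rw [hfun]; exact sg.mul_left γ
  have sTot : Summable (fun t : ℕ => γ ^ t * Rh t - γ ^ (t + 1) * g t) := sRh.sub sg'
  -- telescoping identity
  have tel : ∀ N, ∑ t ∈ Finset.range N, (γ ^ t * Rh t - γ ^ (t + 1) * g t)
      = W 0 - γ ^ N * W N := by
    intro N
    induction N with
    | zero => simp
    | succ N ihN =>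
      rw [Finset.sum_range_succ, ihN]
      have h := step N
      have : γ ^ N * W N = γ ^ N * Rh N + γ ^ (N+1) * W (N+1) - γ ^ (N+1) * g N := by
        rw [h]; ring
      rw [pow_succ] at *
      linarith [this]
  -- limits
  have hWbd : ∀ N : ℕ, ‖γ ^ N * W N‖ ≤ γ ^ N * ∑ s, |V s| := by
    intro N
    rw [Real.norm_eq_abs, abs_mul, abs_of_nonneg (pow_nonneg hγ0 N)]
    apply mul_le_mul_of_nonneg_left _ (pow_nonneg hγ0 N)
    calc |W N| ≤ ∑ s, |d N s * V s| := Finset.abs_sum_le_sum_abs _ _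
      _ ≤ ∑ s, |V s| := by
          apply Finset.sum_le_sum
          intro s _
          rw [abs_mul, abs_of_nonneg (sd_nonneg hTh hπ hμ.1 N s)]
          calc d N s * |V s| ≤ 1 * |V s| :=
                mul_le_mul_of_nonneg_right (sd_le_one hTh hπ hμ N s) (abs_nonneg _)
            _ = |V s| := one_mul _
  have hlim2 : Tendsto (fun N : ℕ => γ ^ N * W N) atTop (𝓝 0) := by
    apply squeeze_zero_norm hWbd
    simpa using (tendsto_pow_atTop_nhds_zero_of_lt_one hγ0 hγ1).mul_const (∑ s, |V s|)
  have hlim3 : Tendsto (fun N : ℕ => W 0 - γ ^ N * W N) atTop (𝓝 (W 0 - 0)) :=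
    tendsto_const_nhds.sub hlim2
  have hlim1 : Tendsto (fun N : ℕ => W 0 - γ ^ N * W N) atTop
      (𝓝 (∑' t : ℕ, (γ ^ t * Rh t - γ ^ (t + 1) * g t))) := by
    have := sTot.hasSum.tendsto_sum_nat
    simpa only [tel] using this
  have hEq : ∑' t : ℕ, (γ ^ t * Rh t - γ ^ (t + 1) * g t) = W 0 := by
    have := tendsto_nhds_unique hlim1 hlim3
    simpa using this
  -- assemble
  have hsplit : ∑' t : ℕ, (γ ^ t * Rh t - γ ^ (t + 1) * g t)
      = (∑' t : ℕ, γ ^ t * Rh t) - γ * ∑' t : ℕ, γ ^ t * g t := by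
    rw [Summable.tsum_sub sRh sg', hfun, tsum_mul_left]
  have hW0 : W 0 = ret γ T π μ0 r := by
    rw [ret_eq_sum_value hT hπ μ0 hγ0 hγ1 r]
    rfl
  have hRet : (∑' t : ℕ, γ ^ t * Rh t) = ret γ Th π μ0 r := rfl
  have hGexp : (∑' t : ℕ, γ ^ t * g t) = expOcc γ Th π μ0 (Gpi γ T Th π r) :=
    tsum_eq_expOcc hTh hπ hμ hγ0 hγ1 _
  rw [← hW0, ← hEq, hsplit, hRet, hGexp]
lemma occ_nonneg {Th : S → A → S → ℝ} {π : S → A → ℝ} {μ0 : S → ℝ}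
    (hTh : IsKernel Th) (hπ : IsPolicy π) (hμ : IsDist μ0)
    {γ : ℝ} (hγ0 : 0 ≤ γ) (s : S) (a : A) : 0 ≤ occupancy γ Th π μ0 s a :=
  mul_nonneg (hπ.1 s a) (tsum_nonneg fun t =>
    mul_nonneg (pow_nonneg hγ0 t) (sd_nonneg hTh hπ hμ.1 t s))

lemma expOcc_mono {Th : S → A → S → ℝ} {π : S → A → ℝ} {μ0 : S → ℝ}
    (hTh : IsKernel Th) (hπ : IsPolicy π) (hμ : IsDist μ0)
    {γ : ℝ} (hγ0 : 0 ≤ γ) {f g : S → A → ℝ} (h : ∀ s a, f s a ≤ g s a) :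
    expOcc γ Th π μ0 f ≤ expOcc γ Th π μ0 g := by
  apply Finset.sum_le_sum; intro s _
  apply Finset.sum_le_sum; intro a _
  exact mul_le_mul_of_nonneg_left (h s a) (occ_nonneg hTh hπ hμ hγ0 s a)

lemma expOcc_smul {Th : S → A → S → ℝ} {π : S → A → ℝ} {μ0 : S → ℝ}
    {γ : ℝ} (c : ℝ) (f : S → A → ℝ) :
    expOcc γ Th π μ0 (fun s a => c * f s a) = c * expOcc γ Th π μ0 f := by
  unfold expOcc
  rw [Finset.mul_sum]
  refine Finset.sum_congr rfl fun s _ => ?_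
  rw [Finset.mul_sum]
  refine Finset.sum_congr rfl fun a _ => ?_
  ring

lemma expOcc_sub {Th : S → A → S → ℝ} {π : S → A → ℝ} {μ0 : S → ℝ}
    {γ : ℝ} (f g : S → A → ℝ) :
    expOcc γ Th π μ0 (fun s a => f s a - g s a)
      = expOcc γ Th π μ0 f - expOcc γ Th π μ0 g := by
  unfold expOcc
  rw [← Finset.sum_sub_distrib]
  refine Finset.sum_congr rfl fun s _ => ?_
  rw [← Finset.sum_sub_distrib]
  refine Finset.sum_congr rfl fun a _ => ?_
  ring
/-- η_M(π̂) ≥ η_M(π^δ) − 2λδ for the best policy π^δ with model error at most δ. -/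
theorem mopo_delta_bound (γ : ℝ) (hγ0 : 0 < γ) (hγ1 : γ < 1)
    (T Th : S → A → S → ℝ) (hT : IsKernel T) (hTh : IsKernel Th)
    (μ0 : S → ℝ) (hμ : IsDist μ0) (r : S → A → ℝ)
    (u : S → A → ℝ) (hu : ∀ s a, 0 ≤ u s a) (lam : ℝ) (hlam : 0 < lam)
    (hadm : ∀ π : S → A → ℝ, IsPolicy π → ∀ s a, γ * |Gpi γ T Th π r s a| ≤ lam * u s a)
    (πhat : S → A → ℝ) (hπhat : IsPolicy πhat)
    (hopt : ∀ π : S → A → ℝ, IsPolicy π →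
      expOcc γ Th π μ0 (fun s a => r s a - lam * u s a)
        ≤ expOcc γ Th πhat μ0 (fun s a => r s a - lam * u s a))
    (δ : ℝ)
    (hδmin : sInf {e : ℝ | ∃ π : S → A → ℝ, IsPolicy π ∧ expOcc γ Th π μ0 u = e} ≤ δ)
    (πδ : S → A → ℝ) (hπδ : IsPolicy πδ) (hπδe : expOcc γ Th πδ μ0 u ≤ δ)
    (hπδopt : ∀ π : S → A → ℝ, IsPolicy π → expOcc γ Th π μ0 u ≤ δ →
      ret γ T π μ0 r ≤ ret γ T πδ μ0 r) :
    ret γ T πhat μ0 r ≥ ret γ T πδ μ0 r - 2 * lam * δ := by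
  have hγ0' := hγ0.le
  have sim_hat := simulation hT hTh hπhat hμ hγ0' hγ1 r
  have sim_d := simulation hT hTh hπδ hμ hγ0' hγ1 r
  have ret_hat : ret γ Th πhat μ0 r = expOcc γ Th πhat μ0 r :=
    tsum_eq_expOcc hTh hπhat hμ hγ0' hγ1 r
  have ret_d : ret γ Th πδ μ0 r = expOcc γ Th πδ μ0 r :=
    tsum_eq_expOcc hTh hπδ hμ hγ0' hγ1 r
  -- bounds on the model-error terms
  have hb : ∀ π : S → A → ℝ, IsPolicy π →
      γ * expOcc γ Th π μ0 (Gpi γ T Th π r) ≤ lam * expOcc γ Th π μ0 u ∧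
      -(lam * expOcc γ Th π μ0 u) ≤ γ * expOcc γ Th π μ0 (Gpi γ T Th π r) := by
    intro π hπ
    have h1 : expOcc γ Th π μ0 (fun s a => γ * Gpi γ T Th π r s a)
        = γ * expOcc γ Th π μ0 (Gpi γ T Th π r) := expOcc_smul γ _
    have h2 : expOcc γ Th π μ0 (fun s a => lam * u s a)
        = lam * expOcc γ Th π μ0 u := expOcc_smul lam _
    constructor
    · rw [← h1, ← h2]
      apply expOcc_mono hTh hπ hμ hγ0'
      intro s a
      calc γ * Gpi γ T Th π r s a ≤ γ * |Gpi γ T Th π r s a| :=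
            mul_le_mul_of_nonneg_left (le_abs_self _) hγ0'
        _ ≤ lam * u s a := hadm π hπ s a
    · rw [← h1, ← h2]
      have h3 : expOcc γ Th π μ0 (fun s a => (-1 : ℝ) * (γ * Gpi γ T Th π r s a))
          = -1 * expOcc γ Th π μ0 (fun s a => γ * Gpi γ T Th π r s a) :=
        expOcc_smul _ _
      have h4 : expOcc γ Th π μ0 (fun s a => (-1 : ℝ) * (γ * Gpi γ T Th π r s a))
          ≤ expOcc γ Th π μ0 (fun s a => lam * u s a) := by
        apply expOcc_mono hTh hπ hμ hγ0'
        intro s a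
        have habs : γ * (-(Gpi γ T Th π r s a)) ≤ γ * |Gpi γ T Th π r s a| :=
          mul_le_mul_of_nonneg_left (neg_le_abs _) hγ0'
        have := hadm π hπ s a
        nlinarith
      linarith [h3, h4]
  obtain ⟨hb1, _⟩ := hb πhat hπhat
  obtain ⟨_, hb2⟩ := hb πδ hπδ
  have hoptd := hopt πδ hπδ
  have lin_hat : expOcc γ Th πhat μ0 (fun s a => r s a - lam * u s a)
      = expOcc γ Th πhat μ0 r - lam * expOcc γ Th πhat μ0 u := by
    rw [show (fun s a => r s a - lam * u s a)
      = fun (s : S) (a : A) => r s a - (fun s a => lam * u s a) s a from rfl,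
      expOcc_sub, expOcc_smul]
  have lin_d : expOcc γ Th πδ μ0 (fun s a => r s a - lam * u s a)
      = expOcc γ Th πδ μ0 r - lam * expOcc γ Th πδ μ0 u := by
    rw [show (fun s a => r s a - lam * u s a)
      = fun (s : S) (a : A) => r s a - (fun s a => lam * u s a) s a from rfl,
      expOcc_sub, expOcc_smul]
  have hlast : lam * expOcc γ Th πδ μ0 u ≤ lam * δ :=
    mul_le_mul_of_nonneg_left hπδe hlam.le
  linarith


end MDP
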